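/- Let N ≥ 2 and let Γ₁,…,Γ_N ∈ ℝ \ {0} satisfy Σ_{i,j ∈ I, i ≠ j} Γ_iΓ_j ≠ 0 for every subset I ⊆ {1,…,N} with |I| ≥ 2. Define H(z₁,…,z_N) = −(1/(2π)) Σ_{i ≠ j} Γ_iΓ_j ln ‖z_i − z_j‖ on the open set F_N(ℝ²) = {(z₁,…,z_N) ∈ (ℝ²)^N : z_i ≠ z_j for i ≠ j}. Then there exist constants c > 0 and δ > 0 such that for every z = (z₁,…,z_N) ∈ F_N(ℝ²) with (Σ_{i=1}^N ‖z_i‖²)^{1/2} < δ one has ‖∇H(z)‖ ≥ c · (Σ_{i=1}^N ‖z_i‖²)^{−1/2}. -/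

import Mathlib

/-- Gradient lower bound near a total collision for the planar vortex
Hamiltonian `H(z) = -(1/2π) ∑_{i≠j} Γ_i Γ_j ln‖z_i - z_j‖` on the configuration space
`F_N(ℝ²)`, under the nondegeneracy condition `∑_{i,j ∈ I, i≠j} Γ_i Γ_j ≠ 0` for all `|I| ≥ 2`:
there are `c, δ > 0` with `‖∇H(z)‖ ≥ c (∑ ‖z_i‖²)^{-1/2}` whenever `(∑ ‖z_i‖²)^{1/2} < δ`.
Here `(∑_{i} ‖z_i‖²)^{1/2} = ‖z‖` in the `L²`-product space. -/
theorem vortex_hamiltonian_gradient_lower_bound (N : ℕ) (hN : 2 ≤ N)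
    (Γ : Fin N → ℝ) (hΓ : ∀ i, Γ i ≠ 0)
    (hsum : ∀ I : Finset (Fin N), 2 ≤ I.card →
      ∑ i ∈ I, ∑ j ∈ I.erase i, Γ i * Γ j ≠ 0)
    (H : (PiLp 2 fun _ : Fin N => EuclideanSpace ℝ (Fin 2)) → ℝ)
    (hH : H = fun z => -(1 / (2 * Real.pi)) *
      ∑ i : Fin N, ∑ j ∈ Finset.univ.erase i, Γ i * Γ j * Real.log ‖z i - z j‖) :
    ∃ c > (0 : ℝ), ∃ δ > (0 : ℝ),
      ∀ z : PiLp 2 fun _ : Fin N => EuclideanSpace ℝ (Fin 2),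
        (∀ i j : Fin N, i ≠ j → z i ≠ z j) → ‖z‖ < δ →
          c * ‖z‖⁻¹ ≤ ‖gradient H z‖ := by
  classical
  set S : ℝ := ∑ i : Fin N, ∑ j ∈ Finset.univ.erase i, Γ i * Γ j with hSdef
  have hS : S ≠ 0 := by
    have := hsum Finset.univ (by simpa [Finset.card_univ] using hN)
    simpa [hSdef] using this
  set L : ℝ := -(1 / (2 * Real.pi)) * S with hLdef
  have hL : L ≠ 0 := by
    have hπ : (2 * Real.pi) ≠ 0 := by positivity
    rw [hLdef]
    intro h
    rcases mul_eq_zero.mp h with h1 | h2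
    · exact (div_ne_zero one_ne_zero hπ) (neg_eq_zero.mp h1)
    · exact hS h2
  refine ⟨|L|, abs_pos.mpr hL, 1, one_pos, ?_⟩
  intro z hz _
  have h01 : (⟨0, by omega⟩ : Fin N) ≠ ⟨1, by omega⟩ := by simp [Fin.ext_iff]
  have hz0 : z ≠ 0 := by
    intro h
    exact hz _ _ h01 (by rw [h]; rfl)
  have hznormpos : 0 < ‖z‖ := norm_pos_iff.mpr hz0
  -- differentiability of H at z
  have hdiff : DifferentiableAt ℝ H z := by
    rw [hH]
    apply DifferentiableAt.const_mul
    apply DifferentiableAt.fun_sum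
    intro i _
    apply DifferentiableAt.fun_sum
    intro j hj
    apply DifferentiableAt.const_mul
    have hji : j ≠ i := Finset.ne_of_mem_erase hj
    have hzz : z i - z j ≠ 0 := sub_ne_zero.mpr (hz i j hji.symm)
    have hproj : DifferentiableAt ℝ (fun w : PiLp 2 (fun _ : Fin N => EuclideanSpace ℝ (Fin 2)) => w i - w j) z :=
      ((PiLp.proj 2 _ i : PiLp 2 (fun _ : Fin N => EuclideanSpace ℝ (Fin 2)) →L[ℝ] EuclideanSpace ℝ (Fin 2)).differentiableAt.sub
        (PiLp.proj 2 _ j : PiLp 2 (fun _ : Fin N => EuclideanSpace ℝ (Fin 2)) →L[ℝ] EuclideanSpace ℝ (Fin 2)).differentiableAt)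
    have hnorm : DifferentiableAt ℝ (fun w : PiLp 2 (fun _ : Fin N => EuclideanSpace ℝ (Fin 2)) => ‖w i - w j‖) z :=
      hproj.norm ℝ hzz
    exact (Real.differentiableAt_log (norm_ne_zero_iff.mpr hzz)).comp z hnorm
  have hfd : HasFDerivAt H (InnerProductSpace.toDual ℝ _ (gradient H z)) z :=
    hdiff.hasGradientAt.hasFDerivAt
  -- derivative of t ↦ H (t • z) at t = 1
  have : ContinuousSMul ℝ (PiLp 2 fun _ : Fin N => EuclideanSpace ℝ (Fin 2)) := IsBoundedSMul.continuousSMul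
  have h1 : HasDerivAt (fun t : ℝ => t • z) z 1 := by
    simpa using (hasDerivAt_id (1 : ℝ)).smul_const z
  have hfd' : HasFDerivAt H (InnerProductSpace.toDual ℝ _ (gradient H z)) ((1 : ℝ) • z) := by
    rw [one_smul]; exact hfd
  have hcurve : HasDerivAt (fun t : ℝ => H (t • z))
      ((InnerProductSpace.toDual ℝ _ (gradient H z)) z) 1 := by
    exact hfd'.comp_hasDerivAt 1 h1
  -- model curve
  have hmodel : HasDerivAt (fun t : ℝ => H z + L * Real.log t) L 1 := by
    have := ((Real.hasDerivAt_log one_ne_zero).const_mul L).const_add (H z)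
    simpa using this
  -- the two curves coincide near 1
  have hev : (fun t : ℝ => H (t • z)) =ᶠ[nhds (1 : ℝ)] fun t => H z + L * Real.log t := by
    filter_upwards [eventually_gt_nhds one_pos] with t ht
    have key : ∀ i : Fin N, ∀ j ∈ (Finset.univ : Finset (Fin N)).erase i,
        Γ i * Γ j * Real.log ‖(t • z) i - (t • z) j‖
          = Γ i * Γ j * Real.log t + Γ i * Γ j * Real.log ‖z i - z j‖ := by
      intro i j hj
      have hji : j ≠ i := Finset.ne_of_mem_erase hj
      have hzz : z i - z j ≠ 0 := sub_ne_zero.mpr (hz i j hji.symm)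
      have hts : (t • z) i - (t • z) j = t • (z i - z j) := by
        simp [smul_sub]
      rw [hts, norm_smul, Real.norm_eq_abs, abs_of_pos ht,
        Real.log_mul (ne_of_gt ht) (norm_ne_zero_iff.mpr hzz)]
      ring
    rw [hH]
    simp only []
    rw [Finset.sum_congr rfl (fun i _ => Finset.sum_congr rfl (key i))]
    simp only [Finset.sum_add_distrib, ← Finset.sum_mul]
    rw [hLdef, hSdef]
    ring
  have huniq : (InnerProductSpace.toDual ℝ _ (gradient H z)) z = L :=
    hcurve.unique (hmodel.congr_of_eventuallyEq hev)
  have hinner : (inner ℝ (gradient H z) z : ℝ) = L := by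
    rw [← InnerProductSpace.toDual_apply_apply]; exact huniq
  have hineq : |L| ≤ ‖gradient H z‖ * ‖z‖ := by
    calc |L| = |(inner ℝ (gradient H z) z : ℝ)| := by rw [hinner]
      _ ≤ ‖gradient H z‖ * ‖z‖ := abs_real_inner_le_norm _ _
  rw [mul_inv_le_iff₀ hznormpos]
  exact hineq
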